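/- Let f be a bounded affine permutation of type (k,n) and for each a ∈ [n] let I_a(f) be its a-anti-exceedance set. Then |I_a(f)| = k for every a, and the sequence (I_1(f),…,I_n(f)) is a Grassmann necklace of type (k,n) whose associated bounded affine permutation is f: with indices mod n, if i ∉ I_i(f) then I_{i+1}(f) = I_i(f), and if i ∈ I_i(f) then I_{i+1}(f) = (I_i(f) ∖ {i}) ∪ {f̄(i)}. -/

import Mathlib

/-- `R(I) = [2n] \ {2n+1-i : i ∈ I}` for subsets of `[2n] = {1,…,2n}`. -/
noncomputable def Rset (n : ℕ) (I : Finset ℤ) : Finset ℤ :=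
  (Finset.Icc (1 : ℤ) (2 * (n : ℤ))) \ (I.image fun x => 2 * (n : ℤ) + 1 - x)

/-- A bounded affine permutation of type `(k,n)`. -/
def IsBAP (n k : ℕ) (f : ℤ → ℤ) : Prop :=
  Function.Bijective f ∧
  (∀ i : ℤ, f (i + (n : ℤ)) = f i + (n : ℤ)) ∧
  (∀ i : ℤ, i ≤ f i ∧ f i ≤ i + (n : ℤ)) ∧
  (∑ i ∈ Finset.Icc (1 : ℤ) (n : ℤ), (f i - i)) = (k : ℤ) * (n : ℤ)

/-- A bounded affine permutation of type `(n,2n)` is symmetric if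
`f(2n+1-a) = 4n+1-f(a)` for all integers `a`. -/
def IsSymmBAP (n : ℕ) (f : ℤ → ℤ) : Prop :=
  ∀ a : ℤ, f (2 * (n : ℤ) + 1 - a) = 4 * (n : ℤ) + 1 - f a

/-- `f̄(i)`: the representative in `[1,n]` of `f(i)` modulo `n`. -/
def fbar (n : ℕ) (f : ℤ → ℤ) (i : ℤ) : ℤ := (f i - 1) % (n : ℤ) + 1

open scoped Classical in
/-- The `a`-anti-exceedance set `I_a(f) = {i ∈ [n] : f̄⁻¹(i) >_a i or f(i) = i+n}`,
where `x ≤_a y ↔ (x-a) mod n ≤ (y-a) mod n` is the cyclic shift of the order on `[1,n]`. -/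
noncomputable def antiExc (n : ℕ) (f : ℤ → ℤ) (a : ℤ) : Finset ℤ :=
  (Finset.Icc (1 : ℤ) (n : ℤ)).filter fun i =>
    f i = i + (n : ℤ) ∨
      ∃ j ∈ Finset.Icc (1 : ℤ) (n : ℤ),
        fbar n f j = i ∧ (i - a) % (n : ℤ) < (j - a) % (n : ℤ)

/-- A Grassmann necklace of type `(k,n)`, encoded as an `n`-periodic family of
`k`-subsets of `[1,n]` indexed by `ℤ`. -/
def IsGN (n k : ℕ) (I : ℤ → Finset ℤ) : Prop :=
  (∀ i : ℤ, I (i + (n : ℤ)) = I i) ∧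
  ∀ i ∈ Finset.Icc (1 : ℤ) (n : ℤ),
    I i ⊆ Finset.Icc (1 : ℤ) (n : ℤ) ∧ (I i).card = k ∧
    (i ∈ I i → ∃ j ∈ Finset.Icc (1 : ℤ) (n : ℤ), I (i + 1) = insert j ((I i).erase i)) ∧
    (i ∉ I i → I (i + 1) = I i)

/-- `f` is the bounded affine permutation associated to the Grassmann necklace `I`:
`f̄(i) = j` if `I_{i+1} = (I_i ∖ {i}) ∪ {j}` with `j ≠ i`; `f(i) = i` if `I_{i+1} = I_i`
and `i ∉ I_i`; `f(i) = i+n` if `I_{i+1} = I_i` and `i ∈ I_i`. -/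
def GNAssoc (n : ℕ) (I : ℤ → Finset ℤ) (f : ℤ → ℤ) : Prop :=
  ∀ i ∈ Finset.Icc (1 : ℤ) (n : ℤ),
    (I (i + 1) = I i → i ∉ I i → f i = i) ∧
    (I (i + 1) = I i → i ∈ I i → f i = i + (n : ℤ)) ∧
    (I (i + 1) ≠ I i → fbar n f i ≠ i ∧ I (i + 1) = insert (fbar n f i) ((I i).erase i))

/-- A dual Grassmann necklace of type `(k,n)`, encoded as an `n`-periodic family of
`k`-subsets of `[1,n]` indexed by `ℤ`. -/
def IsDGN (n k : ℕ) (J : ℤ → Finset ℤ) : Prop :=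
  (∀ i : ℤ, J (i + (n : ℤ)) = J i) ∧
  ∀ i ∈ Finset.Icc (1 : ℤ) (n : ℤ),
    J i ⊆ Finset.Icc (1 : ℤ) (n : ℤ) ∧ (J i).card = k ∧
    (i ∈ J (i + 1) → ∃ j ∈ Finset.Icc (1 : ℤ) (n : ℤ), J i = insert j ((J (i + 1)).erase i)) ∧
    (i ∉ J (i + 1) → J i = J (i + 1))

/-- `f` is the bounded affine permutation associated to the dual Grassmann necklace `J`:
`f̄⁻¹(i) = j` if `J_i = (J_{i+1} ∖ {i}) ∪ {j}` with `j ≠ i`; `f(i) = i` if `J_i = J_{i+1}`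
and `i ∉ J_{i+1}`; `f(i) = i+n` if `J_i = J_{i+1}` and `i ∈ J_{i+1}`. -/
def DGNAssoc (n : ℕ) (J : ℤ → Finset ℤ) (f : ℤ → ℤ) : Prop :=
  ∀ i ∈ Finset.Icc (1 : ℤ) (n : ℤ),
    (J i = J (i + 1) → i ∉ J (i + 1) → f i = i) ∧
    (J i = J (i + 1) → i ∈ J (i + 1) → f i = i + (n : ℤ)) ∧
    (J i ≠ J (i + 1) →
      ∃ j ∈ Finset.Icc (1 : ℤ) (n : ℤ),
        j ≠ i ∧ fbar n f j = i ∧ J i = insert j ((J (i + 1)).erase i))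

/-- The minor `Δ_I`: determinant of the `k×k` matrix whose columns are the columns `v i`,
`i ∈ I`, in increasing order (and `0` if `I` does not have exactly `k` elements). -/
noncomputable def Delta {k : ℕ} (v : ℤ → Fin k → ℝ) (I : Finset ℤ) : ℝ :=
  if h : I.card = k then
    Matrix.det (Matrix.of fun r c : Fin k => v (I.orderIsoOfFin h c).1 r)
  else 0

/-- The `k×n` matrix with columns `v 1, …, v n` is totally nonnegative:
it has (full) rank `k` and all maximal minors are nonnegative. -/
def IsTNN (n k : ℕ) (v : ℤ → Fin k → ℝ) : Prop :=
  Submodule.span ℝ (v '' Set.Icc (1 : ℤ) (n : ℤ)) = ⊤ ∧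
  ∀ I ⊆ Finset.Icc (1 : ℤ) (n : ℤ), I.card = k → 0 ≤ Delta v I

/-- `f` is the span-permutation of the periodically extended column family `v`:
`f(i) = min {r ≥ i : v i ∈ span (v (i+1), …, v r)}` (the empty span being `{0}`). -/
def IsSpanPerm {k : ℕ} (v : ℤ → Fin k → ℝ) (f : ℤ → ℤ) : Prop :=
  ∀ i : ℤ, i ≤ f i ∧ v i ∈ Submodule.span ℝ (v '' Set.Ioc i (f i)) ∧
    ∀ r : ℤ, i ≤ r → v i ∈ Submodule.span ℝ (v '' Set.Ioc i r) → f i ≤ r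

/-- `g(i) = max {r ≤ i : v i ∈ span (v r, …, v (i-1))}` (the empty span being `{0}`). -/
def IsRevSpanPerm {k : ℕ} (v : ℤ → Fin k → ℝ) (g : ℤ → ℤ) : Prop :=
  ∀ i : ℤ, g i ≤ i ∧ v i ∈ Submodule.span ℝ (v '' Set.Ico (g i) i) ∧
    ∀ r : ℤ, r ≤ i → v i ∈ Submodule.span ℝ (v '' Set.Ico r i) → r ≤ g i

/-- The matroid `𝓜(M) = {I : Δ_I(M) ≠ 0}` of the `k×n` matrix with columns `v 1, …, v n`. -/
def Mat (n k : ℕ) (v : ℤ → Fin k → ℝ) : Set (Finset ℤ) :=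
  {I | I ⊆ Finset.Icc (1 : ℤ) (n : ℤ) ∧ I.card = k ∧ Delta v I ≠ 0}

/-- `I ≤_a J` for subsets of `[1,n]`: elementwise comparison, after sorting each set in
`≤_a`-increasing order, in the cyclically shifted order `x ≤_a y ↔ (x-a) mod n ≤ (y-a) mod n`. -/
def cycLE (n : ℕ) (a : ℤ) (I J : Finset ℤ) : Prop :=
  List.Forall₂ (· ≤ ·)
    ((I.image fun x => (x - a) % (n : ℤ)).sort (· ≤ ·))
    ((J.image fun x => (x - a) % (n : ℤ)).sort (· ≤ ·))

/-- `Ia` is the `≤_a`-minimal element of the matroid of `v` (i.e. `Ia = I_a(M)`). -/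
def IsCycMin (n k : ℕ) (v : ℤ → Fin k → ℝ) (a : ℤ) (Ia : Finset ℤ) : Prop :=
  Ia ∈ Mat n k v ∧ ∀ J ∈ Mat n k v, cycLE n a Ia J

/-- The columns of `M · xᵢ(c)`, extended `n`-periodically: column `j` with `j ≡ i+1 (mod n)`
becomes `v j + c • v (j-1)`; all other columns are unchanged. -/
def bridgeCol (n : ℕ) (i : ℤ) (c : ℝ) {k : ℕ} (v : ℤ → Fin k → ℝ) : ℤ → Fin k → ℝ :=
  fun j => if (j - (i + 1)) % (n : ℤ) = 0 then v j + c • v (j - 1) else v j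

/-- The `n×2n` matrix with columns `v 1, …, v (2n)` is Plücker-symmetric:
`Δ_{R(I)} = Δ_I` for every `n`-element subset `I ⊆ [2n]`. -/
def PSym (n : ℕ) (v : ℤ → Fin n → ℝ) : Prop :=
  ∀ I ⊆ Finset.Icc (1 : ℤ) (2 * (n : ℤ)), I.card = n → Delta v (Rset n I) = Delta v I

/-- The affine simple transposition `sᵢ` modulo `n`: swaps `j ↔ j+1` for every `j ≡ i (mod n)`
and fixes all other integers. -/
def affS (n : ℕ) (i : ℤ) (j : ℤ) : ℤ :=
  if (j - i) % (n : ℤ) = 0 then j + 1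
  else if (j - (i + 1)) % (n : ℤ) = 0 then j - 1
  else j

section Aux
variable {n : ℕ} {f : ℤ → ℤ} {a i j x y : ℤ}

private lemma emod_sub_cast (z : ℤ) : (z - (n:ℤ)) % (n:ℤ) = z % n := by
  simp [Int.sub_emod]

private lemma emod_pos_eval (hn : 0 < (n:ℤ)) {z : ℤ} (h0 : 0 ≤ z) (h1 : z < n) :
    z % (n:ℤ) = z := Int.emod_eq_of_lt h0 h1

private lemma emod_neg_eval (hn : 0 < (n:ℤ)) {z : ℤ} (h0 : -n ≤ z) (h1 : z < 0) :
    z % (n:ℤ) = z + n := by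
  have h2 : (z + (n:ℤ)*1) % (n:ℤ) = z % n := Int.add_mul_emod_self_left ..
  have h3 : (z + (n:ℤ)) % n = z + n := Int.emod_eq_of_lt (by omega) (by omega)
  rw [show z + (n:ℤ) = z + n*1 by ring] at h3
  omega

private lemma emod_nn (hn : 0 < (n:ℤ)) (z : ℤ) : 0 ≤ z % (n:ℤ) := Int.emod_nonneg z (by omega)
private lemma emod_lt' (hn : 0 < (n:ℤ)) (z : ℤ) : z % (n:ℤ) < n := Int.emod_lt_of_pos z hn

private lemma emod_sub_eq_zero_iff (hn : 0 < (n:ℤ)) (hx : x ∈ Finset.Icc (1:ℤ) n)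
    (hy : y ∈ Finset.Icc (1:ℤ) n) : (x - y) % (n:ℤ) = 0 ↔ x = y := by
  simp only [Finset.mem_Icc] at hx hy
  constructor
  · intro h
    rcases lt_trichotomy x y with h1 | h1 | h1
    · rw [emod_neg_eval hn (by omega) (by omega)] at h; omega
    · exact h1
    · rw [emod_pos_eval hn (by omega) (by omega)] at h; omega
  · intro h; simp [h]

private lemma emod_shift (hn : 0 < (n:ℤ)) (ha : a ∈ Finset.Icc (1:ℤ) n)
    (hx : x ∈ Finset.Icc (1:ℤ) n) (hxa : x ≠ a) :
    (x - (a + 1)) % (n:ℤ) = (x - a) % n - 1 := by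
  simp only [Finset.mem_Icc] at ha hx
  rcases lt_or_gt_of_ne hxa with h | h
  · rw [emod_neg_eval hn (by omega) (by omega), emod_neg_eval hn (by omega) (by omega)]; ring
  · rw [emod_pos_eval hn (by omega) (by omega), emod_pos_eval hn (by omega) (by omega)]; ring

private lemma emod_a_succ (hn : 0 < (n:ℤ)) : (a - (a + 1)) % (n:ℤ) = n - 1 := by
  rw [show a - (a+1) = (-1 : ℤ) by ring, emod_neg_eval hn (by omega) (by omega)]; ring

private lemma fbar_mem (hn : 0 < (n:ℤ)) (i : ℤ) : fbar n f i ∈ Finset.Icc (1:ℤ) n := by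
  have h1 := emod_nn hn (f i - 1); have h2 := emod_lt' hn (f i - 1)
  simp only [fbar, Finset.mem_Icc]; omega

private lemma fbar_low (hn : 0 < (n:ℤ)) (h1 : 1 ≤ f i) (h2 : f i ≤ n) : fbar n f i = f i := by
  unfold fbar; rw [emod_pos_eval hn (by omega) (by omega)]; ring

private lemma fbar_high (hn : 0 < (n:ℤ)) (h1 : (n:ℤ) < f i) (h2 : f i ≤ 2*n) :
    fbar n f i = f i - n := by
  unfold fbar
  rw [← emod_sub_cast (f i - 1), emod_pos_eval hn (by omega) (by omega)]; ring

end Aux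

section Aux2
variable {n k : ℕ} {f : ℤ → ℤ} {a i j : ℤ}

private lemma fbar_cases (hn : 0 < (n:ℤ)) (hB : ∀ i : ℤ, i ≤ f i ∧ f i ≤ i + n)
    (hi : i ∈ Finset.Icc (1:ℤ) n) :
    (f i ≤ n ∧ fbar n f i = f i) ∨ ((n:ℤ) < f i ∧ fbar n f i = f i - n) := by
  simp only [Finset.mem_Icc] at hi
  obtain ⟨hb1, hb2⟩ := hB i
  rcases le_or_gt (f i) n with h | h
  · exact Or.inl ⟨h, fbar_low hn (by omega) h⟩
  · exact Or.inr ⟨h, fbar_high hn h (by omega)⟩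

private lemma fbar_injOn (hn : 0 < (n:ℤ)) (hinj : Function.Injective f)
    (hper : ∀ i : ℤ, f (i + n) = f i + n) (hB : ∀ i : ℤ, i ≤ f i ∧ f i ≤ i + n)
    (hi : i ∈ Finset.Icc (1:ℤ) n) (hj : j ∈ Finset.Icc (1:ℤ) n)
    (h : fbar n f i = fbar n f j) : i = j := by
  have hi' := hi; have hj' := hj
  simp only [Finset.mem_Icc] at hi' hj'
  rcases fbar_cases hn hB hi with ⟨h1, h2⟩ | ⟨h1, h2⟩ <;>
    rcases fbar_cases hn hB hj with ⟨h3, h4⟩ | ⟨h3, h4⟩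
  · exact hinj (by omega)
  · exfalso
    have : f j = f (i + n) := by rw [hper i]; omega
    have := hinj this
    omega
  · exfalso
    have : f i = f (j + n) := by rw [hper j]; omega
    have := hinj this
    omega
  · exact hinj (by omega)

private lemma fbar_image (hn : 0 < (n:ℤ)) (hinj : Function.Injective f)
    (hper : ∀ i : ℤ, f (i + n) = f i + n) (hB : ∀ i : ℤ, i ≤ f i ∧ f i ≤ i + n) :
    (Finset.Icc (1:ℤ) n).image (fbar n f) = Finset.Icc (1:ℤ) n := by
  apply Finset.eq_of_subset_of_card_le
  · intro x hx
    obtain ⟨y, _, rfl⟩ := Finset.mem_image.mp hx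
    exact fbar_mem hn y
  · rw [Finset.card_image_of_injOn (fun x hx y hy h => fbar_injOn hn hinj hper hB hx hy h)]

private lemma exists_fbar (hn : 0 < (n:ℤ)) (hinj : Function.Injective f)
    (hper : ∀ i : ℤ, f (i + n) = f i + n) (hB : ∀ i : ℤ, i ≤ f i ∧ f i ≤ i + n)
    (hi : i ∈ Finset.Icc (1:ℤ) n) : ∃ j ∈ Finset.Icc (1:ℤ) n, fbar n f j = i := by
  have h := fbar_image hn hinj hper hB (f := f)
  rw [← h] at hi
  simpa using Finset.mem_image.mp hi

private lemma fbar_fix_iff (hn : 0 < (n:ℤ)) (hB : ∀ i : ℤ, i ≤ f i ∧ f i ≤ i + n)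
    (hi : i ∈ Finset.Icc (1:ℤ) n) :
    fbar n f i = i ↔ (f i = i ∨ f i = i + n) := by
  have hi' := hi; simp only [Finset.mem_Icc] at hi'
  constructor
  · intro h
    rcases fbar_cases hn hB hi with ⟨h1, h2⟩ | ⟨h1, h2⟩
    · left; omega
    · right; omega
  · rintro (h | h)
    · rw [fbar_low hn (by omega) (by omega)]; omega
    · rw [fbar_high hn (by omega) (by omega)]; omega

private lemma mem_antiExc :
    i ∈ antiExc n f a ↔ i ∈ Finset.Icc (1:ℤ) n ∧ (f i = i + n ∨
      ∃ j ∈ Finset.Icc (1:ℤ) n, fbar n f j = i ∧ (i - a) % n < (j - a) % n) := by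
  unfold antiExc
  exact Finset.mem_filter

end Aux2


section Aux3
variable {n k : ℕ} {f : ℤ → ℤ} {a i j : ℤ}

private lemma antiExc_period (n : ℕ) (f : ℤ → ℤ) (a : ℤ) :
    antiExc n f (a + n) = antiExc n f a := by
  ext i
  rw [mem_antiExc, mem_antiExc]
  have e : ∀ z : ℤ, (z - (a + n)) % n = (z - a) % n := fun z => by
    rw [show z - (a + (n:ℤ)) = (z - a) - n by ring, emod_sub_cast]
  simp only [e]

private lemma exc_shift_iff (hn : 0 < (n:ℤ)) (ha : a ∈ Finset.Icc (1:ℤ) n)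
    (hi : i ∈ Finset.Icc (1:ℤ) n) (hia : i ≠ a) (hfa : fbar n f a ≠ i) :
    (∃ j ∈ Finset.Icc (1:ℤ) n, fbar n f j = i ∧ (i - (a+1)) % n < (j - (a+1)) % n) ↔
    (∃ j ∈ Finset.Icc (1:ℤ) n, fbar n f j = i ∧ (i - a) % n < (j - a) % n) := by
  constructor <;> rintro ⟨j, hj, hfj, hlt⟩ <;> refine ⟨j, hj, hfj, ?_⟩ <;>
  · have hja : j ≠ a := fun h => hfa (by rw [← h]; exact hfj)
    rw [emod_shift hn ha hi hia, emod_shift hn ha hj hja] at *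
    omega

private lemma caseA (hn : 0 < (n:ℤ)) (hinj : Function.Injective f)
    (hper : ∀ i : ℤ, f (i + n) = f i + n) (hB : ∀ i : ℤ, i ≤ f i ∧ f i ≤ i + n)
    (ha : a ∈ Finset.Icc (1:ℤ) n) (hfa : f a = a) :
    antiExc n f (a + 1) = antiExc n f a := by
  have hfb : fbar n f a = a := (fbar_fix_iff hn hB ha).mpr (Or.inl hfa)
  ext i
  rw [mem_antiExc, mem_antiExc]
  by_cases hi : i ∈ Finset.Icc (1:ℤ) n
  swap
  · simp [hi]
  by_cases hia : i = a
  · subst hia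
    have ha' := ha; simp only [Finset.mem_Icc] at ha'
    constructor <;> rintro ⟨_, h | ⟨j, hj, hfj, hlt⟩⟩ <;>
      first
      | omega
      | · have : j = i := fbar_injOn hn hinj hper hB hj ha (by rw [hfj, hfb])
          subst this
          exact absurd hlt (lt_irrefl _)
  · have hfa' : fbar n f a ≠ i := by rw [hfb]; exact fun h => hia h.symm
    rw [and_congr_right_iff]
    intro _
    rw [or_congr_right (exc_shift_iff hn ha hi hia hfa')]

private lemma caseB (hn : 0 < (n:ℤ)) (hinj : Function.Injective f)
    (hper : ∀ i : ℤ, f (i + n) = f i + n) (hB : ∀ i : ℤ, i ≤ f i ∧ f i ≤ i + n)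
    (ha : a ∈ Finset.Icc (1:ℤ) n) (hfa : f a = a + n) :
    antiExc n f (a + 1) = antiExc n f a := by
  have hfb : fbar n f a = a := (fbar_fix_iff hn hB ha).mpr (Or.inr hfa)
  ext i
  rw [mem_antiExc, mem_antiExc]
  by_cases hi : i ∈ Finset.Icc (1:ℤ) n
  swap
  · simp [hi]
  by_cases hia : i = a
  · subst hia
    simp [hi, hfa]
  · have hfa' : fbar n f a ≠ i := by rw [hfb]; exact fun h => hia h.symm
    rw [and_congr_right_iff]
    intro _
    rw [or_congr_right (exc_shift_iff hn ha hi hia hfa')]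

end Aux3


section Aux4
variable {n k : ℕ} {f : ℤ → ℤ} {a i j : ℤ}

private lemma caseC (hn : 0 < (n:ℤ)) (hinj : Function.Injective f)
    (hper : ∀ i : ℤ, f (i + n) = f i + n) (hB : ∀ i : ℤ, i ≤ f i ∧ f i ≤ i + n)
    (ha : a ∈ Finset.Icc (1:ℤ) n) (hfa1 : f a ≠ a) (hfa2 : f a ≠ a + n) :
    a ∈ antiExc n f a ∧ fbar n f a ≠ a ∧ fbar n f a ∉ antiExc n f a ∧
      a ∉ antiExc n f (a + 1) ∧
      antiExc n f (a + 1) = insert (fbar n f a) ((antiExc n f a).erase a) := by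
  have hbm : fbar n f a ∈ Finset.Icc (1:ℤ) n := fbar_mem hn a
  have hba : fbar n f a ≠ a := fun h => by
    rcases (fbar_fix_iff hn hB ha).mp h with h' | h' <;> [exact hfa1 h'; exact hfa2 h']
  obtain ⟨j₀, hj₀, hfj₀⟩ := exists_fbar hn hinj hper hB ha
  have hj₀a : j₀ ≠ a := fun h => hba (h ▸ hfj₀)
  have haIa : a ∈ antiExc n f a := by
    rw [mem_antiExc]
    refine ⟨ha, Or.inr ⟨j₀, hj₀, hfj₀, ?_⟩⟩
    have h1 : (a - a) % (n:ℤ) = 0 := by simp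
    have h2 : (j₀ - a) % (n:ℤ) ≠ 0 := fun h =>
      hj₀a ((emod_sub_eq_zero_iff hn hj₀ ha).mp h)
    have h3 := emod_nn hn (j₀ - a)
    omega
  have hbIa : fbar n f a ∉ antiExc n f a := by
    intro h
    rcases (mem_antiExc.mp h).2 with h' | ⟨j, hj, hfj, hlt⟩
    · have hfb : fbar n f (fbar n f a) = fbar n f a :=
        (fbar_fix_iff hn hB hbm).mpr (Or.inr h')
      exact hba (fbar_injOn hn hinj hper hB hbm ha hfb)
    · have : j = a := fbar_injOn hn hinj hper hB hj ha (by rw [hfj])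
      subst this
      have h1 : (j - j) % (n:ℤ) = 0 := by simp
      have h3 := emod_nn hn (fbar n f j - j)
      omega
  have haIa1 : a ∉ antiExc n f (a + 1) := by
    intro h
    rcases (mem_antiExc.mp h).2 with h' | ⟨j, hj, hfj, hlt⟩
    · exact hfa2 h'
    · have hja : j ≠ a := fun h => hba (h ▸ hfj)
      rw [emod_a_succ hn, emod_shift hn ha hj hja] at hlt
      have := emod_lt' hn (j - a)
      omega
  refine ⟨haIa, hba, hbIa, haIa1, ?_⟩
  ext i
  rw [Finset.mem_insert, Finset.mem_erase]
  by_cases hi : i ∈ Finset.Icc (1:ℤ) n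
  swap
  · have h1 : i ∉ antiExc n f (a+1) := fun h => hi (mem_antiExc.mp h).1
    have h2 : i ∉ antiExc n f a := fun h => hi (mem_antiExc.mp h).1
    have h3 : i ≠ fbar n f a := fun h => hi (h ▸ hbm)
    simp [h1, h2, h3]
  by_cases hia : i = a
  · subst hia
    simp only [mem_antiExc] at haIa1 ⊢
    constructor
    · intro h; exact absurd (mem_antiExc.mpr h) (by rw [mem_antiExc]; exact haIa1)
    · rintro (h | ⟨h, _⟩)
      · exact absurd h.symm hba
      · exact absurd rfl h
  by_cases hib : i = fbar n f a
  · subst hib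
    have : fbar n f a ∈ antiExc n f (a + 1) := by
      rw [mem_antiExc]
      refine ⟨hbm, Or.inr ⟨a, ha, rfl, ?_⟩⟩
      rw [emod_a_succ hn, emod_shift hn ha hbm hia]
      have := emod_lt' hn (fbar n f a - a)
      omega
    simp [this]
  · have hfa' : fbar n f a ≠ i := fun h => hib h.symm
    have key : i ∈ antiExc n f (a + 1) ↔ i ∈ antiExc n f a := by
      rw [mem_antiExc, mem_antiExc, and_congr_right_iff]
      intro _
      rw [or_congr_right (exc_shift_iff hn ha hi hia hfa')]
    rw [key]
    simp [hib, hia]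

private lemma mem_self_iff (hn : 0 < (n:ℤ)) (hinj : Function.Injective f)
    (hper : ∀ i : ℤ, f (i + n) = f i + n) (hB : ∀ i : ℤ, i ≤ f i ∧ f i ≤ i + n)
    (ha : a ∈ Finset.Icc (1:ℤ) n) :
    a ∈ antiExc n f a ↔ f a ≠ a := by
  have ha' := ha; simp only [Finset.mem_Icc] at ha'
  constructor
  · intro h hfa
    rcases (mem_antiExc.mp h).2 with h' | ⟨j, hj, hfj, hlt⟩
    · omega
    · have hfb : fbar n f a = a := (fbar_fix_iff hn hB ha).mpr (Or.inl hfa)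
      have : j = a := fbar_injOn hn hinj hper hB hj ha (by rw [hfj, hfb])
      subst this
      exact absurd hlt (lt_irrefl _)
  · intro hne
    by_cases h2 : f a = a + n
    · exact mem_antiExc.mpr ⟨ha, Or.inl h2⟩
    · exact (caseC hn hinj hper hB ha hne h2).1

end Aux4


section Aux5
variable {n k : ℕ} {f : ℤ → ℤ} {a i j : ℤ}

open scoped Classical in
private lemma card_filter_gt (hn : 0 < (n:ℤ)) (hinj : Function.Injective f)
    (hper : ∀ i : ℤ, f (i + n) = f i + n) (hB : ∀ i : ℤ, i ≤ f i ∧ f i ≤ i + n)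
    (hsum : (∑ i ∈ Finset.Icc (1:ℤ) n, (f i - i)) = (k:ℤ) * n) :
    ((Finset.Icc (1:ℤ) n).filter fun j => (n:ℤ) < f j).card = k := by
  have himg := fbar_image hn hinj hper hB (f := f)
  have hsum2 : ∑ j ∈ Finset.Icc (1:ℤ) n, fbar n f j = ∑ j ∈ Finset.Icc (1:ℤ) n, j := by
    conv_rhs => rw [← himg]
    rw [Finset.sum_image (fun x hx y hy h => fbar_injOn hn hinj hper hB hx hy h)]
  have key : ∀ j ∈ Finset.Icc (1:ℤ) n,
      f j - j = (fbar n f j - j) + (if (n:ℤ) < f j then (n:ℤ) else 0) := by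
    intro j hj
    rcases fbar_cases hn hB hj with ⟨h1, h2⟩ | ⟨h1, h2⟩
    · rw [if_neg (by omega)]; omega
    · rw [if_pos h1]; omega
  rw [Finset.sum_congr rfl key, Finset.sum_add_distrib] at hsum
  have hz : ∑ j ∈ Finset.Icc (1:ℤ) n, (fbar n f j - j) = 0 := by
    rw [Finset.sum_sub_distrib, hsum2, sub_self]
  rw [hz, zero_add, ← Finset.sum_filter, Finset.sum_const, nsmul_eq_mul] at hsum
  have hcast : ((((Finset.Icc (1:ℤ) n).filter fun j => (n:ℤ) < f j).card : ℤ)) = k :=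
    mul_right_cancel₀ (by omega : (n:ℤ) ≠ 0) hsum
  exact_mod_cast hcast

open scoped Classical in
private lemma antiExc_one_eq (hn : 0 < (n:ℤ)) (hinj : Function.Injective f)
    (hper : ∀ i : ℤ, f (i + n) = f i + n) (hB : ∀ i : ℤ, i ≤ f i ∧ f i ≤ i + n) :
    antiExc n f 1 = ((Finset.Icc (1:ℤ) n).filter fun j => (n:ℤ) < f j).image (fbar n f) := by
  ext i
  rw [mem_antiExc, Finset.mem_image]
  constructor
  · rintro ⟨hi, h | ⟨j, hj, hfj, hlt⟩⟩
    · have hi' := hi; simp only [Finset.mem_Icc] at hi'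
      refine ⟨i, Finset.mem_filter.mpr ⟨hi, by omega⟩, ?_⟩
      exact (fbar_fix_iff hn hB hi).mpr (Or.inr h)
    · have hi' := hi; have hj' := hj
      simp only [Finset.mem_Icc] at hi' hj'
      rw [emod_pos_eval hn (by omega) (by omega), emod_pos_eval hn (by omega) (by omega)] at hlt
      have hgt : (n:ℤ) < f j := by
        rcases fbar_cases hn hB hj with ⟨h1, h2⟩ | ⟨h1, h2⟩
        · exfalso; have := (hB j).1; omega
        · exact h1
      exact ⟨j, Finset.mem_filter.mpr ⟨hj, hgt⟩, hfj⟩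
  · rintro ⟨j, hj, rfl⟩
    obtain ⟨hj, hgt⟩ := Finset.mem_filter.mp hj
    have hj' := hj; simp only [Finset.mem_Icc] at hj'
    have hfb : fbar n f j = f j - n := fbar_high hn hgt (by have := (hB j).2; omega)
    refine ⟨fbar_mem hn j, ?_⟩
    by_cases h2 : f j = j + n
    · left
      have hjj : fbar n f j = j := by omega
      rw [hjj]
      exact h2
    · right
      refine ⟨j, hj, rfl, ?_⟩
      have hb : 1 ≤ fbar n f j ∧ fbar n f j ≤ n := by
        have := fbar_mem hn (f := f) j; simpa [Finset.mem_Icc] using this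
      have hlt2 : fbar n f j < j := by have := (hB j).2; omega
      rw [emod_pos_eval hn (by omega) (by omega), emod_pos_eval hn (by omega) (by omega)]
      omega

end Aux5


/-- For a bounded affine permutation `f` of type `(k,n)`, the anti-exceedance
sets `I_a(f)` all have `k` elements, and `(I_1(f),…,I_n(f))` is a Grassmann necklace of type
`(k,n)` whose associated bounded affine permutation is `f`: with indices mod `n`, if
`i ∉ I_i(f)` then `I_{i+1}(f) = I_i(f)`, and if `i ∈ I_i(f)` then
`I_{i+1}(f) = (I_i(f) ∖ {i}) ∪ {f̄(i)}`. -/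
theorem antiExceedance_is_GrassmannNecklace (n k : ℕ) (f : ℤ → ℤ) (hf : IsBAP n k f) :
    (∀ a ∈ Finset.Icc (1 : ℤ) (n : ℤ), (antiExc n f a).card = k) ∧
    IsGN n k (antiExc n f) ∧
    GNAssoc n (antiExc n f) f ∧
    ∀ i ∈ Finset.Icc (1 : ℤ) (n : ℤ),
      (i ∉ antiExc n f i → antiExc n f (i + 1) = antiExc n f i) ∧
      (i ∈ antiExc n f i →
        antiExc n f (i + 1) = insert (fbar n f i) ((antiExc n f i).erase i)) := by
  classical
  obtain ⟨hbij, hper, hB, hsum⟩ := hf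
  have hinj := hbij.injective
  rcases le_or_gt ((n:ℤ)) 0 with hn0 | hn
  · have hempty : Finset.Icc (1:ℤ) (n:ℤ) = ∅ := Finset.Icc_eq_empty (by omega)
    refine ⟨fun a ha => ?_, ⟨fun i => antiExc_period n f i, fun i hi => ?_⟩,
      fun i hi => ?_, fun i hi => ?_⟩ <;> rw [hempty] at * <;> simp_all
  · have hcard1 : (antiExc n f 1).card = k := by
      rw [antiExc_one_eq hn hinj hper hB,
        Finset.card_image_of_injOn (fun x hx y hy h =>
          fbar_injOn hn hinj hper hB (Finset.filter_subset _ _ hx)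
            (Finset.filter_subset _ _ hy) h)]
      exact card_filter_gt hn hinj hper hB hsum
    have hstep : ∀ a ∈ Finset.Icc (1:ℤ) (n:ℤ),
        (antiExc n f (a+1)).card = (antiExc n f a).card := by
      intro a ha
      by_cases h1 : f a = a
      · rw [caseA hn hinj hper hB ha h1]
      by_cases h2 : f a = a + n
      · rw [caseB hn hinj hper hB ha h2]
      obtain ⟨haIa, hba, hbIa, _, heq⟩ := caseC hn hinj hper hB ha h1 h2
      rw [heq, Finset.card_insert_of_notMem (fun h => hbIa (Finset.mem_of_mem_erase h)),
        Finset.card_erase_of_mem haIa]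
      have hpos : 0 < (antiExc n f a).card := Finset.card_pos.mpr ⟨a, haIa⟩
      omega
    have hcard : ∀ a ∈ Finset.Icc (1:ℤ) (n:ℤ), (antiExc n f a).card = k := by
      have haux : ∀ m : ℕ, 1 + (m:ℤ) ≤ n → (antiExc n f (1 + m)).card = k := by
        intro m
        induction m with
        | zero => intro _; simpa using hcard1
        | succ p ih =>
          intro hle
          push_cast at hle
          have hp : 1 + (p:ℤ) ≤ n := by omega
          have hmem : (1 + (p:ℤ)) ∈ Finset.Icc (1:ℤ) (n:ℤ) := by
            simp only [Finset.mem_Icc]; omega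
          have hs := hstep _ hmem
          rw [show (1:ℤ) + ((p+1 : ℕ):ℤ) = (1 + (p:ℤ)) + 1 by push_cast; ring]
          rw [hs]; exact ih hp
      intro a ha
      have ha' := ha; simp only [Finset.mem_Icc] at ha'
      have e : (1:ℤ) + (((a-1).toNat : ℕ) : ℤ) = a := by omega
      have hx := haux (a-1).toNat (by omega)
      rwa [e] at hx
    have htrans : ∀ i ∈ Finset.Icc (1:ℤ) (n:ℤ),
        (i ∉ antiExc n f i → antiExc n f (i+1) = antiExc n f i) ∧
        (i ∈ antiExc n f i →
          antiExc n f (i+1) = insert (fbar n f i) ((antiExc n f i).erase i)) := by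
      intro i hi
      constructor
      · intro hni
        have hfi : f i = i := by
          by_contra h
          exact hni ((mem_self_iff hn hinj hper hB hi).mpr h)
        exact caseA hn hinj hper hB hi hfi
      · intro hii
        have hfi : f i ≠ i := (mem_self_iff hn hinj hper hB hi).mp hii
        by_cases h2 : f i = i + n
        · have hfb : fbar n f i = i := (fbar_fix_iff hn hB hi).mpr (Or.inr h2)
          rw [caseB hn hinj hper hB hi h2, hfb, Finset.insert_erase hii]
        · exact (caseC hn hinj hper hB hi hfi h2).2.2.2.2
    refine ⟨hcard, ⟨fun i => antiExc_period n f i, fun i hi => ?_⟩, fun i hi => ?_,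
      fun i hi => ⟨(htrans i hi).1, (htrans i hi).2⟩⟩
    · exact ⟨fun x hx => (mem_antiExc.mp hx).1, hcard i hi,
        fun hii => ⟨fbar n f i, fbar_mem hn i, (htrans i hi).2 hii⟩, (htrans i hi).1⟩
    · refine ⟨fun _ hni => ?_, fun heq hii => ?_, fun hne => ?_⟩
      · by_contra hfi
        exact hni ((mem_self_iff hn hinj hper hB hi).mpr hfi)
      · by_contra h2
        have hfi : f i ≠ i := (mem_self_iff hn hinj hper hB hi).mp hii
        obtain ⟨_, _, _, hnot, _⟩ := caseC hn hinj hper hB hi hfi h2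
        rw [heq] at hnot
        exact hnot hii
      · have hii : i ∈ antiExc n f i := by
          by_contra h
          exact hne ((htrans i hi).1 h)
        have h1 : f i ≠ i := (mem_self_iff hn hinj hper hB hi).mp hii
        have h2 : f i ≠ i + n := fun h2 => hne (caseB hn hinj hper hB hi h2)
        obtain ⟨_, hba, _, _, heq⟩ := caseC hn hinj hper hB hi h1 h2
        exact ⟨hba, heq⟩
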